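/- In the Cartesian product G □ H of connected graphs, for an edge of the form (u,v₁)(u,v₂) with v₁v₂ ∈ E(H), the local resolving neighborhood satisfies L_{G□H}((u,v₁)(u,v₂)) = V(G) × L_H(v₁v₂). -/

import Mathlib

open scoped Classical
open Finset

namespace FracLocal

/-- The local resolving neighborhood of a (potential) edge `uv`:
vertices whose distances to `u` and `v` differ. -/
noncomputable def locRes {V : Type*} [Fintype V] (G : SimpleGraph V) (u v : V) : Finset V :=
  Finset.univ.filter (fun x => G.dist x u ≠ G.dist x v)

/-- A local resolving function: values in `[0,1]` summing to at least `1`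
on every local resolving neighborhood of an edge. -/
def IsLRF {V : Type*} [Fintype V] (G : SimpleGraph V) (f : V → ℝ) : Prop :=
  (∀ x, 0 ≤ f x ∧ f x ≤ 1) ∧ ∀ u v, G.Adj u v → 1 ≤ ∑ x ∈ locRes G u v, f x

/-- The fractional local metric dimension. -/
noncomputable def ldimf {V : Type*} [Fintype V] (G : SimpleGraph V) : ℝ :=
  sInf {w : ℝ | ∃ f : V → ℝ, IsLRF G f ∧ w = ∑ x, f x}

/-- The (integral) local metric dimension. -/
noncomputable def ldim {V : Type*} [Fintype V] (G : SimpleGraph V) : ℕ :=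
  sInf {k : ℕ | ∃ S : Finset V, S.card = k ∧
    ∀ u v, G.Adj u v → (S ∩ locRes G u v).Nonempty}

/-- `l(G)`: the minimum cardinality of a local resolving neighborhood of an edge. -/
noncomputable def lG {V : Type*} [Fintype V] (G : SimpleGraph V) : ℕ :=
  sInf {k : ℕ | ∃ u v, G.Adj u v ∧ (locRes G u v).card = k}

/-- The closed neighborhood `N[u]`. -/
def closedNbhd {V : Type*} (G : SimpleGraph V) (u : V) : Set V :=
  insert u (G.neighborSet u)

/-- `u` and `v` are true twins: distinct vertices with `N[u] = N[v]`. -/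
def TrueTwins {V : Type*} (G : SimpleGraph V) (u v : V) : Prop :=
  u ≠ v ∧ closedNbhd G u = closedNbhd G v

end FracLocal

section dist
open SimpleGraph


section dist
variable {α β : Type*} {G : SimpleGraph α} {H : SimpleGraph β}

lemma auxLenCast {γ : Type*} {G : SimpleGraph γ} {a a' b : γ} (h : a = a') (w : G.Walk a' b) :
    (h ▸ w).length = w.length := by subst h; rfl

lemma auxLenLe [DecidableEq α] [DecidableEq β] [DecidableRel G.Adj] [DecidableRel H.Adj]
    {x y : α × β} (w : (G □ H).Walk x y) :
    w.ofBoxProdLeft.length + w.ofBoxProdRight.length ≤ w.length := by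
  induction w with
  | nil => simp [Walk.ofBoxProdLeft, Walk.ofBoxProdRight]
  | @cons x y z h w ih =>
    rcases id h with hG | hH
    · have hH' : ¬ (H.Adj x.2 y.2 ∧ x.1 = y.1) := by
        rintro ⟨hh, -⟩; rw [hG.2] at hh; exact hh.ne rfl
      rw [Walk.ofBoxProdLeft, Walk.ofBoxProdRight, Or.by_cases, dif_neg hH',
        Walk.length_cons]
      simp only [Or.by_cases, dif_pos hG]
      rw [Walk.length_cons,
        auxLenCast hG.2 w.ofBoxProdRight]
      omega
    · have hG' : ¬ (G.Adj x.1 y.1 ∧ x.2 = y.2) := by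
        rintro ⟨hh, -⟩; rw [hH.2] at hh; exact hh.ne rfl
      rw [Walk.ofBoxProdLeft, Walk.ofBoxProdRight, Or.by_cases, dif_pos hH,
        Walk.length_cons]
      simp only [Or.by_cases, dif_neg hG']
      rw [Walk.length_cons,
        auxLenCast hH.2 w.ofBoxProdLeft]
      omega

lemma auxBoxProdDist (hG : G.Connected) (hH : H.Connected) (x y : α × β) :
    (G □ H).dist x y = G.dist x.1 y.1 + H.dist x.2 y.2 := by
  classical
  have hcon : (G □ H).Connected := hG.boxProd hH
  apply le_antisymm
  · obtain ⟨w₁, hw₁⟩ := hG.exists_walk_length_eq_dist x.1 y.1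
    obtain ⟨w₂, hw₂⟩ := hH.exists_walk_length_eq_dist x.2 y.2
    have : ((w₁.boxProdLeft H x.2).append (w₂.boxProdRight G y.1)).length =
        G.dist x.1 y.1 + H.dist x.2 y.2 := by
      have e1 : (w₁.boxProdLeft H x.2).length = w₁.length := Walk.length_map _ _
      have e2 : (w₂.boxProdRight G y.1).length = w₂.length := Walk.length_map _ _
      rw [Walk.length_append, e1, e2, hw₁, hw₂]
    calc (G □ H).dist x y ≤ _ := SimpleGraph.dist_le _
      _ = _ := this
  · obtain ⟨w, hw⟩ := hcon.exists_walk_length_eq_dist x y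
    calc G.dist x.1 y.1 + H.dist x.2 y.2
        ≤ w.ofBoxProdLeft.length + w.ofBoxProdRight.length :=
          Nat.add_le_add (SimpleGraph.dist_le _) (SimpleGraph.dist_le _)
      _ ≤ w.length := auxLenLe w
      _ = _ := hw

end dist

open FracLocal in
/-- In the Cartesian product `G □ H` of connected graphs, for an
edge `(u,v₁)(u,v₂)` with `v₁v₂ ∈ E(H)`,
`L_{G□H}((u,v₁)(u,v₂)) = V(G) × L_H(v₁v₂)`. -/
theorem stmt_18 {α β : Type*} [Fintype α] [Fintype β]
    (G : SimpleGraph α) (H : SimpleGraph β)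
    (hG : G.Connected) (hH : H.Connected)
    (u : α) {v₁ v₂ : β} (h : H.Adj v₁ v₂) :
    locRes (G □ H) (u, v₁) (u, v₂) = Finset.univ ×ˢ locRes H v₁ v₂ := by
  classical
  ext ⟨a, b⟩
  simp only [locRes, Finset.mem_filter, Finset.mem_univ, true_and, Finset.mem_product,
    auxBoxProdDist hG hH]
  constructor
  · intro hne hb; exact hne (by simp [hb])
  · intro hb hne; exact hb (by omega)
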